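/- Let X be a separable Banach space, T₁, ..., T_N ∈ L(X), let Y₀ ⊆ X be dense, (y_l)_{l≥1} ⊆ Y₀^N a dense sequence in X^N, maps S_n : Y₀^N → X for n ≥ 0, pairwise disjoint sets A_k ⊆ ℕ each of positive lower density, and a sequence (ε_k) of positive reals tending to 0, such that for each l ≥ 1 and each j ∈ {1,...,N}: (1) Σ_{n ∈ A_l} S_n y_l converges unconditionally in X uniformly in l; (2) for any n ∈ ⋃_k A_k, ‖Σ_{i ∈ A_l \ {n}} T_jⁿ S_i y_l‖ ≤ ε_l; (3) for any n ∈ A_l and any k < l, ‖Σ_{i ∈ A_k} T_jⁿ S_i y_k‖ ≤ ε_l; (4) for any n ∈ A_l, ‖T_jⁿ S_n y_l − y_{l,j}‖ ≤ ε_l. Then T₁, ..., T_N are disjoint frequently hypercyclic, i.e., there exists x ∈ X such that for all nonempty open U₁, ..., U_N ⊆ X, the set {n : T_jⁿ x ∈ U_j for all j} has positive lower density. -/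

import Mathlib

open scoped Classical

noncomputable def lowerDensity (A : Set ℕ) : ℝ :=
  Filter.liminf
    (fun N : ℕ => (((Finset.range (N + 1)).filter (· ∈ A)).card : ℝ) / (N : ℝ))
    Filter.atTop

lemma lowerDensity_mono {A B : Set ℕ} (h : A ⊆ B) : lowerDensity A ≤ lowerDensity B := by
  unfold lowerDensity
  apply Filter.liminf_le_liminf
  · refine Filter.Eventually.of_forall fun n => ?_
    rw [div_eq_mul_inv, div_eq_mul_inv]
    refine mul_le_mul_of_nonneg_right ?_ (by positivity)
    exact_mod_cast Finset.card_le_card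
      (Finset.monotone_filter_right _ (fun m _ hm => h hm))
  · exact ⟨0, Filter.eventually_map.2 (Filter.Eventually.of_forall fun n => by positivity)⟩
  · apply Filter.IsBoundedUnder.isCoboundedUnder_ge
    refine ⟨2, Filter.eventually_map.2 ?_⟩
    filter_upwards [Filter.eventually_ge_atTop 1] with n hn
    have hc : (((Finset.range (n + 1)).filter (· ∈ B)).card : ℝ) ≤ (n : ℝ) + 1 := by
      have := Finset.card_filter_le (Finset.range (n + 1)) (· ∈ B)
      have h2 : ((Finset.range (n+1)).filter (· ∈ B)).card ≤ n + 1 := by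
        simpa using this
      exact_mod_cast h2
    have hn' : (1 : ℝ) ≤ (n : ℝ) := by exact_mod_cast hn
    rw [div_le_iff₀ (by linarith)]
    linarith

lemma iter_clm {X : Type*} [NormedAddCommGroup X] [NormedSpace ℂ X]
    (T : X →L[ℂ] X) : ∀ (n : ℕ) (w : X), (⇑T)^[n] w = (T ^ n) w := by
  intro n
  induction n with
  | zero => intro w; simp
  | succ n ih =>
      intro w
      rw [Function.iterate_succ, Function.comp_apply, ih, pow_succ,
        ContinuousLinearMap.mul_apply]

/-- the Disjoint Frequent Hypercyclicity Criterion. -/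
theorem stmt_13 {X : Type*} [NormedAddCommGroup X] [NormedSpace ℂ X] [CompleteSpace X]
    [TopologicalSpace.SeparableSpace X]
    (N : ℕ) (T : Fin N → X →L[ℂ] X)
    (Y₀ : Set X) (hY₀ : Dense Y₀)
    (y : ℕ → Fin N → X) (hyY₀ : ∀ l j, y l j ∈ Y₀) (hyDense : DenseRange y)
    (S : ℕ → (Fin N → X) → X)
    (A : ℕ → Set ℕ) (hAdisj : ∀ k k', k ≠ k' → Disjoint (A k) (A k'))
    (hAdens : ∀ k, 0 < lowerDensity (A k))
    (ε : ℕ → ℝ) (hεpos : ∀ k, 0 < ε k)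
    (hεlim : Filter.Tendsto ε Filter.atTop (nhds 0))
    -- (1) `∑_{n ∈ A_l} S_n y_l` converges unconditionally, uniformly in `l`:
    (h1 : ∀ δ : ℝ, 0 < δ → ∃ M : ℕ, ∀ l : ℕ, ∀ F : Finset ℕ, (∀ n ∈ F, M ≤ n) →
      ‖∑ n ∈ F.filter (· ∈ A l), S n (y l)‖ ≤ δ)
    -- (2)
    (h2 : ∀ l : ℕ, ∀ j : Fin N, ∀ n ∈ ⋃ k, A k,
      ‖∑' i : ↥(A l \ {n}), (⇑(T j))^[n] (S (↑i) (y l))‖ ≤ ε l)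
    -- (3)
    (h3 : ∀ l : ℕ, ∀ j : Fin N, ∀ n ∈ A l, ∀ k < l,
      ‖∑' i : ↥(A k), (⇑(T j))^[n] (S (↑i) (y k))‖ ≤ ε l)
    -- (4)
    (h4 : ∀ l : ℕ, ∀ j : Fin N, ∀ n ∈ A l,
      ‖(⇑(T j))^[n] (S n (y l)) - y l j‖ ≤ ε l) :
    ∃ x : X, ∀ U : Fin N → Set X, (∀ j, IsOpen (U j)) → (∀ j, (U j).Nonempty) →
      0 < lowerDensity {n : ℕ | ∀ j, (⇑(T j))^[n] x ∈ U j} := by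
  by_cases hdeg : N = 0 ∨ Subsingleton X
  · refine ⟨0, fun U hUo hUne => ?_⟩
    have hsub : A 0 ⊆ {n : ℕ | ∀ j, (⇑(T j))^[n] (0 : X) ∈ U j} := by
      intro n _ j
      rcases hdeg with h0 | hs
      · exact absurd j.isLt (by omega)
      · obtain ⟨u, hu⟩ := hUne j
        haveI := hs
        rwa [Subsingleton.elim ((⇑(T j))^[n] (0 : X)) u]
    exact lt_of_lt_of_le (hAdens 0) (lowerDensity_mono hsub)
  push_neg at hdeg
  obtain ⟨hN0, hsub'⟩ := hdeg
  haveI : Nontrivial X := hsub'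
  haveI : Nonempty (Fin N) := ⟨⟨0, Nat.pos_of_ne_zero hN0⟩⟩
  haveI : Nontrivial (Fin N → X) := Function.nontrivial
  haveI hpn : ∀ v : Fin N → X, (nhdsWithin v {v}ᶜ).NeBot :=
    fun v => Module.punctured_nhds_neBot ℂ _ v
  -- conversion between subtype sums and filtered sums over ℕ
  have sum_coe : ∀ (l : ℕ) (t : Finset ↥(A l)),
      ∑ i ∈ t, S (↑i) (y l)
        = ∑ n ∈ (t.image (fun i : ↥(A l) => (i : ℕ))).filter (· ∈ A l), S n (y l) := by
    intro l t
    have himg : (t.image (fun i : ↥(A l) => (i : ℕ))).filter (· ∈ A l)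
        = t.image (fun i : ↥(A l) => (i : ℕ)) := by
      refine Finset.filter_true_of_mem fun n hn => ?_
      obtain ⟨i, _, rfl⟩ := Finset.mem_image.1 hn
      exact i.2
    rw [himg, Finset.sum_image (fun a _ b _ h => Subtype.ext h)]
  -- summability of each series
  have sumA : ∀ l : ℕ, Summable (fun i : ↥(A l) => S (↑i) (y l)) := by
    intro l
    refine summable_iff_vanishing_norm.2 fun δ hδ => ?_
    obtain ⟨M, hM⟩ := h1 (δ / 2) (by positivity)
    refine ⟨(Finset.range M).subtype (· ∈ A l), fun t ht => ?_⟩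
    have key : ∀ n ∈ t.image (fun i : ↥(A l) => (i : ℕ)), M ≤ n := by
      intro n hn
      obtain ⟨i, hit, rfl⟩ := Finset.mem_image.1 hn
      by_contra hlt
      push_neg at hlt
      exact (Finset.disjoint_left.1 ht) hit
        (Finset.mem_subtype.2 (Finset.mem_range.2 hlt))
    calc ‖∑ i ∈ t, S (↑i) (y l)‖
        = ‖∑ n ∈ (t.image (fun i : ↥(A l) => (i : ℕ))).filter (· ∈ A l), S n (y l)‖ := by
          rw [sum_coe]
      _ ≤ δ / 2 := hM l _ key
      _ < δ := by linarith
  -- norm bound for series whose support starts late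
  have tailbound : ∀ (δ : ℝ) (M : ℕ),
      (∀ (l : ℕ) (F : Finset ℕ), (∀ n ∈ F, M ≤ n) → ‖∑ n ∈ F.filter (· ∈ A l), S n (y l)‖ ≤ δ) →
      ∀ l : ℕ, (∀ n ∈ A l, M ≤ n) → ‖∑' i : ↥(A l), S (↑i) (y l)‖ ≤ δ := by
    intro δ M hM l hl
    have hb : ∀ t : Finset ↥(A l), ‖∑ i ∈ t, S (↑i) (y l)‖ ≤ δ := by
      intro t
      rw [sum_coe]
      refine hM l _ fun n hn => ?_
      obtain ⟨i, _, rfl⟩ := Finset.mem_image.1 hn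
      exact hl _ i.2
    exact le_of_tendsto ((continuous_norm.tendsto _).comp (sumA l).hasSum)
      (Filter.Eventually.of_forall hb)
  -- choose thresholds from (1)
  have hMex : ∀ m : ℕ, ∃ M : ℕ, ∀ (l : ℕ) (F : Finset ℕ), (∀ n ∈ F, M ≤ n) →
      ‖∑ n ∈ F.filter (· ∈ A l), S n (y l)‖ ≤ (1/2 : ℝ) ^ m :=
    fun m => h1 _ (by positivity)
  choose M hM using hMex
  -- target decoding
  set pfn : ℕ → ℕ := fun m => (Nat.unpair ((Nat.unpair m).2)).1 with hpfn
  set qfn : ℕ → ℕ := fun m => (Nat.unpair ((Nat.unpair m).2)).2 with hqfn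
  -- existence of good indices
  have hnext : ∀ m prev : ℕ, ∃ l : ℕ, prev < l ∧ ε l ≤ (1/2 : ℝ) ^ m / (m + 2) ∧
      (∀ n ∈ A l, M m ≤ n) ∧ dist (y l) (y (pfn m)) < 1 / ((qfn m : ℝ) + 1) := by
    intro m prev
    have hc : (0:ℝ) < (1/2 : ℝ) ^ m / (m + 2) := by positivity
    obtain ⟨Lε, hLε⟩ := Filter.eventually_atTop.1
      ((hεlim.eventually_lt_const hc))
    have hbadHead : {l : ℕ | ¬ ∀ n ∈ A l, M m ≤ n}.Finite := by
      set f : ℕ → ℕ := fun l =>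
        if h : ∃ n, n ∈ A l ∧ n < M m then h.choose else 0 with hf
      have hfl : ∀ l ∈ {l : ℕ | ¬ ∀ n ∈ A l, M m ≤ n}, f l ∈ A l ∧ f l < M m := by
        intro l hl
        simp only [Set.mem_setOf_eq] at hl
        push_neg at hl
        obtain ⟨n, hn, hn'⟩ := hl
        have hex : ∃ n, n ∈ A l ∧ n < M m := ⟨n, hn, hn'⟩
        simp only [hf, dif_pos hex]
        exact hex.choose_spec
      refine Set.Finite.of_finite_image (f := f) ?_ ?_
      · exact (Set.finite_Iio (M m)).subset (by
          rintro _ ⟨l, hl, rfl⟩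
          exact (hfl l hl).2)
      · intro l₁ hl₁ l₂ hl₂ hf12
        by_contra hne
        exact Set.disjoint_left.1 (hAdisj l₁ l₂ hne) (hfl l₁ hl₁).1
          (hf12 ▸ (hfl l₂ hl₂).1)
    have hbad : ({l : ℕ | ¬ ∀ n ∈ A l, M m ≤ n} ∪ Set.Iic (max prev Lε)).Finite :=
      hbadHead.union (Set.finite_Iic _)
    have hdense : Dense (Set.range y \
        (y '' ({l : ℕ | ¬ ∀ n ∈ A l, M m ≤ n} ∪ Set.Iic (max prev Lε)))) :=
      hyDense.diff_finite (hbad.image y)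
    obtain ⟨v, hv1, hv2⟩ := hdense.exists_mem_open
      (Metric.isOpen_ball (x := y (pfn m)) (ε := 1 / ((qfn m : ℝ) + 1)))
      ⟨y (pfn m), Metric.mem_ball_self (by positivity)⟩
    obtain ⟨⟨l, rfl⟩, hnotim⟩ := hv1
    have hlgood : l ∉ {l : ℕ | ¬ ∀ n ∈ A l, M m ≤ n} ∪ Set.Iic (max prev Lε) := by
      intro hmem
      exact hnotim (Set.mem_image_of_mem y hmem)
    simp only [Set.mem_union, Set.mem_setOf_eq, Set.mem_Iic, not_or, not_le] at hlgood
    obtain ⟨hhead, hgt⟩ := hlgood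
    push_neg at hhead
    refine ⟨l, lt_of_le_of_lt (le_max_left _ _) hgt, ?_, hhead, Metric.mem_ball.1 hv2⟩
    exact le_of_lt (hLε l (le_of_lt (lt_of_le_of_lt (le_max_right _ _) hgt)))
  choose g hg using hnext
  set L : ℕ → ℕ := fun m => Nat.rec (g 0 0) (fun m ih => g (m+1) ih) m with hLdef
  have hLsucc : ∀ m, L (m + 1) = g (m + 1) (L m) := fun m => rfl
  have hLspec : ∀ m, ε (L m) ≤ (1/2 : ℝ) ^ m / (m + 2) ∧
      (∀ n ∈ A (L m), M m ≤ n) ∧ dist (y (L m)) (y (pfn m)) < 1 / ((qfn m : ℝ) + 1) := by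
    intro m
    cases m with
    | zero => exact (hg 0 0).2
    | succ m => exact (hg (m+1) (L m)).2
  have hLmono : StrictMono L := by
    apply strictMono_nat_of_lt_succ
    intro m
    rw [hLsucc m]
    exact (hg (m+1) (L m)).1
  -- the vector x
  set z : ℕ → X := fun m => ∑' i : ↥(A (L m)), S (↑i) (y (L m)) with hzdef
  have hznorm : ∀ m, ‖z m‖ ≤ (1/2 : ℝ) ^ m :=
    fun m => tailbound _ (M m) (hM m) (L m) (hLspec m).2.1
  have hzsum : Summable z :=
    Summable.of_norm_bounded (summable_geometric_of_lt_one (by norm_num) (by norm_num))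
      hznorm
  set x : X := ∑' m, z m with hxdef
  -- the key estimate
  have key : ∀ m : ℕ, ∀ n ∈ A (L m), ∀ j : Fin N,
      ‖(⇑(T j))^[n] x - y (L m) j‖ ≤ 2 * (1/2 : ℝ) ^ m := by
    intro m n hn j
    set Φ : X →L[ℂ] X := (T j) ^ n with hΦdef
    have hiter : ∀ w : X, (⇑(T j))^[n] w = Φ w := fun w => iter_clm (T j) n w
    have hΦz : ∀ m', Φ (z m')
        = ∑' i : ↥(A (L m')), (⇑(T j))^[n] (S (↑i) (y (L m'))) := by
      intro m'
      rw [hzdef]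
      rw [Φ.map_tsum (sumA (L m'))]
      exact tsum_congr fun i => (hiter _).symm
    have hnUnion : n ∈ ⋃ k, A k := Set.mem_iUnion.2 ⟨L m, hn⟩
    have hgt : ∀ m', m < m' → ‖Φ (z m')‖ ≤ ε (L m') := by
      intro m' hm'
      have hne : n ∉ A (L m') := fun hmem =>
        Set.disjoint_left.1 (hAdisj (L m) (L m') (ne_of_lt (hLmono hm'))) hn hmem
      have h := h2 (L m') j n hnUnion
      rw [Set.diff_singleton_eq_self hne] at h
      rwa [hΦz m']
    have hlt : ∀ m', m' < m → ‖Φ (z m')‖ ≤ ε (L m) := by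
      intro m' hm'
      rw [hΦz m']
      exact h3 (L m) j n hn (L m') (hLmono hm')
    -- splitting off the term at n
    have hsum' : Summable ((A (L m)).indicator (fun i => Φ (S i (y (L m))))) :=
      summable_subtype_iff_indicator.mp (Φ.summable (sumA (L m)))
    have hsplit : Φ (z m) = Φ (S n (y (L m)))
        + ∑' i : ↥(A (L m) \ {n}), Φ (S (↑i) (y (L m))) := by
      have e2 : (fun i : ℕ => if i = n then 0 else
            (A (L m)).indicator (fun i => Φ (S i (y (L m)))) i)
          = (A (L m) \ {n}).indicator (fun i => Φ (S i (y (L m)))) := by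
        funext i
        by_cases hi : i = n
        · subst hi
          simp [Set.indicator, Set.mem_diff]
        · by_cases hiA : i ∈ A (L m) <;>
            simp [Set.indicator, Set.mem_diff, hi, hiA]
      calc Φ (z m) = ∑' i : ↥(A (L m)), Φ (S (↑i) (y (L m))) := by
            rw [hzdef]; exact Φ.map_tsum (sumA (L m))
        _ = ∑' i : ℕ, (A (L m)).indicator (fun i => Φ (S i (y (L m)))) i :=
            tsum_subtype (A (L m)) (fun i => Φ (S i (y (L m))))
        _ = (A (L m)).indicator (fun i => Φ (S i (y (L m)))) n
            + ∑' i : ℕ, (if i = n then 0 else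
                (A (L m)).indicator (fun i => Φ (S i (y (L m)))) i) :=
            Summable.tsum_eq_add_tsum_ite hsum' n
        _ = Φ (S n (y (L m)))
            + ∑' i : ↥(A (L m) \ {n}), Φ (S (↑i) (y (L m))) := by
            rw [Set.indicator_of_mem hn, e2, ← tsum_subtype]
    have hmain : ‖Φ (z m) - y (L m) j‖ ≤ 2 * ε (L m) := by
      have hrest : ‖∑' i : ↥(A (L m) \ {n}), Φ (S (↑i) (y (L m)))‖ ≤ ε (L m) := by
        have h := h2 (L m) j n hnUnion
        have : (∑' i : ↥(A (L m) \ {n}), (⇑(T j))^[n] (S (↑i) (y (L m))))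
            = ∑' i : ↥(A (L m) \ {n}), Φ (S (↑i) (y (L m))) :=
          tsum_congr fun i => hiter _
        rwa [this] at h
      have hone : ‖Φ (S n (y (L m))) - y (L m) j‖ ≤ ε (L m) := by
        have h := h4 (L m) j n hn
        rwa [hiter] at h
      calc ‖Φ (z m) - y (L m) j‖
          = ‖(Φ (S n (y (L m))) - y (L m) j)
              + ∑' i : ↥(A (L m) \ {n}), Φ (S (↑i) (y (L m)))‖ := by
            rw [hsplit, add_sub_right_comm]
        _ ≤ ‖Φ (S n (y (L m))) - y (L m) j‖
              + ‖∑' i : ↥(A (L m) \ {n}), Φ (S (↑i) (y (L m)))‖ := norm_add_le _ _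
        _ ≤ ε (L m) + ε (L m) := add_le_add hone hrest
        _ = 2 * ε (L m) := by ring
    have hsum_all : Summable (fun m' => Φ (z m')) := Φ.summable hzsum
    have hxdecomp : Φ x = (∑ m' ∈ Finset.range m, Φ (z m')) + (Φ (z m)
        + ∑' i : ℕ, Φ (z (i + (m + 1)))) := by
      rw [hxdef, Φ.map_tsum hzsum, ← Summable.sum_add_tsum_nat_add (m + 1) hsum_all,
        Finset.sum_range_succ, add_assoc]
    have htail : ‖∑' i : ℕ, Φ (z (i + (m + 1)))‖ ≤ (1/2 : ℝ) ^ m := by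
      have hgeo2 : HasSum (fun i : ℕ => (1/2 : ℝ) ^ i) 2 := by
        have h := hasSum_geometric_of_lt_one (r := (1/2 : ℝ)) (by norm_num) (by norm_num)
        norm_num at h
        exact h
      have hgeo := hgeo2.mul_left ((1/2 : ℝ) ^ (m + 1))
      have hval : (1/2 : ℝ) ^ (m + 1) * 2 = (1/2 : ℝ) ^ m := by
        rw [pow_succ]; ring
      rw [hval] at hgeo
      refine tsum_of_norm_bounded hgeo fun i => ?_
      have hb := hgt (i + (m + 1)) (by omega)
      refine hb.trans ?_
      have hε := (hLspec (i + (m + 1))).1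
      refine hε.trans ?_
      have hd : (1/2 : ℝ) ^ (i + (m + 1)) / ((i + (m + 1) : ℕ) + 2) ≤
          (1/2 : ℝ) ^ (i + (m + 1)) := by
        refine div_le_self (by positivity) ?_
        have : (0:ℝ) ≤ ((i + (m + 1) : ℕ) : ℝ) := by positivity
        linarith
      refine hd.trans ?_
      rw [show i + (m + 1) = (m + 1) + i by omega, pow_add]
    have hheadsum : ‖∑ m' ∈ Finset.range m, Φ (z m')‖ ≤ m * ε (L m) := by
      calc ‖∑ m' ∈ Finset.range m, Φ (z m')‖ ≤ ∑ m' ∈ Finset.range m, ‖Φ (z m')‖ :=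
            norm_sum_le _ _
        _ ≤ ∑ m' ∈ Finset.range m, ε (L m) :=
            Finset.sum_le_sum fun m' hm' => hlt m' (Finset.mem_range.1 hm')
        _ = m * ε (L m) := by
            rw [Finset.sum_const, Finset.card_range, nsmul_eq_mul]
    have hεm : ((m : ℝ) + 2) * ε (L m) ≤ (1/2 : ℝ) ^ m := by
      have h := (hLspec m).1
      have hm2 : (0:ℝ) < (m : ℝ) + 2 := by positivity
      rw [le_div_iff₀ hm2] at h
      linarith
    have hrearr : Φ x - y (L m) j = (∑ m' ∈ Finset.range m, Φ (z m'))
        + ((Φ (z m) - y (L m) j) + ∑' i : ℕ, Φ (z (i + (m + 1)))) := by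
      rw [hxdecomp]; abel
    rw [hiter, hrearr]
    calc ‖(∑ m' ∈ Finset.range m, Φ (z m'))
          + ((Φ (z m) - y (L m) j) + ∑' i : ℕ, Φ (z (i + (m + 1))))‖
        ≤ ‖∑ m' ∈ Finset.range m, Φ (z m')‖
          + (‖Φ (z m) - y (L m) j‖ + ‖∑' i : ℕ, Φ (z (i + (m + 1)))‖) :=
          (norm_add_le _ _).trans (by gcongr; exact norm_add_le _ _)
      _ ≤ m * ε (L m) + (2 * ε (L m) + (1/2 : ℝ) ^ m) :=
          add_le_add hheadsum (add_le_add hmain htail)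
      _ ≤ 2 * (1/2 : ℝ) ^ m := by nlinarith [hεm]
  -- conclusion
  refine ⟨x, fun U hUo hUne => ?_⟩
  choose u hu using hUne
  have hr : ∀ j, ∃ r > 0, Metric.ball (u j) r ⊆ U j :=
    fun j => Metric.isOpen_iff.1 (hUo j) (u j) (hu j)
  choose r hrpos hrball using hr
  have hne : (Finset.univ : Finset (Fin N)).Nonempty := Finset.univ_nonempty
  set r0 : ℝ := Finset.univ.inf' hne r with hr0def
  have hr0pos : 0 < r0 := by
    rw [hr0def, Finset.lt_inf'_iff]
    exact fun j _ => hrpos j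
  have hr0le : ∀ j, r0 ≤ r j := fun j => Finset.inf'_le _ (Finset.mem_univ j)
  obtain ⟨p, hp⟩ := Metric.denseRange_iff.1 hyDense u (r0 / 4) (by positivity)
  obtain ⟨q, hq⟩ := exists_nat_one_div_lt (show (0:ℝ) < r0 / 4 by positivity)
  obtain ⟨k, hk⟩ := exists_pow_lt_of_lt_one (show (0:ℝ) < r0 / 8 by positivity)
    (show (1/2 : ℝ) < 1 by norm_num)
  set m : ℕ := Nat.pair k (Nat.pair p q) with hmdef
  have hpm : pfn m = p := by
    simp [hpfn, hmdef, Nat.unpair_pair]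
  have hqm : qfn m = q := by
    simp [hqfn, hmdef, Nat.unpair_pair]
  have hkm : k ≤ m := Nat.left_le_pair _ _
  have hsub : A (L m) ⊆ {n : ℕ | ∀ j, (⇑(T j))^[n] x ∈ U j} := by
    intro n hn
    intro j
    have hkey := key m n hn j
    have hd1 : ‖(⇑(T j))^[n] x - y (L m) j‖ < r0 / 4 := by
      refine lt_of_le_of_lt hkey ?_
      have : (1/2 : ℝ) ^ m ≤ (1/2 : ℝ) ^ k :=
        pow_le_pow_of_le_one (by norm_num) (by norm_num) hkm
      nlinarith
    have hd2 : dist (y (L m) j) (y p j) < r0 / 4 := by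
      refine lt_of_le_of_lt (dist_le_pi_dist _ _ j) ?_
      have := (hLspec m).2.2
      rw [hpm, hqm] at this
      refine this.trans (lt_of_lt_of_le hq ?_)
      exact le_refl _
    have hd3 : dist (y p j) (u j) < r0 / 4 := by
      refine lt_of_le_of_lt ?_ hp
      calc dist (y p j) (u j) ≤ dist (y p) u := dist_le_pi_dist _ _ j
        _ = dist u (y p) := dist_comm _ _
    have : dist ((⇑(T j))^[n] x) (u j) < r j := by
      calc dist ((⇑(T j))^[n] x) (u j)
          ≤ dist ((⇑(T j))^[n] x) (y (L m) j) + dist (y (L m) j) (y p j)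
            + dist (y p j) (u j) := dist_triangle4 _ _ _ _
        _ < r0 / 4 + r0 / 4 + r0 / 4 := by
            rw [dist_eq_norm]
            exact add_lt_add (add_lt_add hd1 hd2) hd3
        _ ≤ r j := by
            have := hr0le j
            linarith
    exact hrball j (Metric.mem_ball.2 this)
  exact lt_of_lt_of_le (hAdens (L m)) (lowerDensity_mono hsub)
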